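/- Let ρ' be a d×d density matrix with eigendecomposition having eigenvalues λ₁,…,λ_d, and for each j let b_j be the smallest nonnegative integer with 2^{b_j} ≥ dλ_j; set k = 2^{b₁}+…+2^{b_d}. Then σ := (1/3)·(4I_k/k − Split_{b₁,…,b_d}(ρ')) is a valid density matrix (positive semidefinite with trace 1). -/

import Mathlib

open Matrix BigOperators

/-- The index set of `Split`: pairs `(j, s)` with `j ∈ [d]` and `s ∈ {0,1}^{b j}`. -/
abbrev SIdx (d : ℕ) (b : Fin d → ℕ) := Σ j : Fin d, Fin (b j) → Bool

/-- `s` is a prefix of `t` (as bit strings). -/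
def BitPrefix {a c : ℕ} (s : Fin a → Bool) (t : Fin c → Bool) : Prop :=
  ∃ h : a ≤ c, ∀ i : Fin a, t (Fin.castLE h i) = s i

open scoped Classical in
/-- The splitting map `Split_{b₁,…,b_d}`: the entry at `((j₁,s₁),(j₂,s₂))` is
`M_{j₁ j₂} / 2^{max(b_{j₁}, b_{j₂})}` if one of `s₁, s₂` is a prefix of the other,
and `0` otherwise. -/
noncomputable def Split {d : ℕ} (b : Fin d → ℕ) (M : Matrix (Fin d) (Fin d) ℂ) :
    Matrix (SIdx d b) (SIdx d b) ℂ := fun p q =>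
  if BitPrefix p.2 q.2 ∨ BitPrefix q.2 p.2 then
    M p.1 q.1 / 2 ^ max (b p.1) (b q.1) else 0

open scoped Classical in
/-- The dual splitting map `DSplit_{b₁,…,b_d}`: the entry at `((j₁,s₁),(j₂,s₂))` is
`N_{j₁ j₂}` if one of `s₁, s₂` is a prefix of the other, and `0` otherwise. -/
noncomputable def DSplit {d : ℕ} (b : Fin d → ℕ) (N : Matrix (Fin d) (Fin d) ℂ) :
    Matrix (SIdx d b) (SIdx d b) ℂ := fun p q =>
  if BitPrefix p.2 q.2 ∨ BitPrefix q.2 p.2 then N p.1 q.1 else 0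

/-- Frobenius norm of a matrix. -/
noncomputable def frobNorm {n m : Type*} [Fintype n] [Fintype m] (A : Matrix n m ℂ) : ℝ :=
  Real.sqrt (∑ i, ∑ j, ‖A i j‖ ^ 2)

/-- Operator (spectral) norm of a matrix. -/
noncomputable def opNorm {n : Type*} [Fintype n] [DecidableEq n] (A : Matrix n n ℂ) : ℝ :=
  ‖(Matrix.toEuclideanCLM (𝕜 := ℂ) A : EuclideanSpace ℂ n →L[ℂ] EuclideanSpace ℂ n)‖
open scoped ComplexOrder

lemma bitPrefix_same_len {a : ℕ} (s t : Fin a → Bool) : BitPrefix s t ↔ t = s := by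
  constructor
  · rintro ⟨h, hi⟩; funext i; exact hi i
  · rintro rfl; exact ⟨le_refl _, fun i => rfl⟩

lemma split_diagonal {d : ℕ} (b : Fin d → ℕ) (f : Fin d → ℂ) :
    Split b (Matrix.diagonal f) =
      Matrix.diagonal (fun p : SIdx d b => f p.1 / 2 ^ (b p.1)) := by
  classical
  ext p q
  obtain ⟨j, s⟩ := p
  obtain ⟨j', t⟩ := q
  unfold Split
  by_cases hj : j = j'
  · subst hj
    by_cases hst : s = t
    · subst hst
      simp [bitPrefix_same_len, Matrix.diagonal_apply_eq]
    · have h1 : ¬ BitPrefix s t := by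
        rw [bitPrefix_same_len]; exact fun h => hst h.symm
      have h2 : ¬ BitPrefix t s := by
        rw [bitPrefix_same_len]; exact fun h => hst h
      have hne : (⟨j, s⟩ : SIdx d b) ≠ ⟨j, t⟩ := by
        intro h; exact hst (by simpa using h)
      simp [h1, h2, Matrix.diagonal_apply_ne _ hne]
  · have hne : (⟨j, s⟩ : SIdx d b) ≠ ⟨j', t⟩ := by
      intro h; exact hj (congrArg Sigma.fst h)
    rw [Matrix.diagonal_apply_ne _ hne]
    simp [Matrix.diagonal_apply_ne _ hj]

lemma trace_eq_sum_eigenvalues {n : ℕ} (A : Matrix (Fin n) (Fin n) ℂ) (hA : A.IsHermitian) :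
    A.trace = ∑ i, (hA.eigenvalues i : ℂ) := by
  conv_lhs => rw [hA.spectral_theorem]
  rw [Unitary.conjStarAlgAut_apply]
  rw [Matrix.trace_mul_comm, ← mul_assoc]
  rw [(Matrix.mem_unitaryGroup_iff'.mp (hA.eigenvectorUnitary).2)]
  simp [Matrix.trace_diagonal]

theorem recentered_state_density {d : ℕ} (ρ' : Matrix (Fin d) (Fin d) ℂ)
    (hρ' : ρ'.IsHermitian) (hpsd : ρ'.PosSemidef) (htr : ρ'.trace = 1)
    (b : Fin d → ℕ)
    (hb : ∀ j, (d : ℝ) * hρ'.eigenvalues j ≤ 2 ^ (b j))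
    (hmin : ∀ j (n : ℕ), (d : ℝ) * hρ'.eigenvalues j ≤ 2 ^ n → b j ≤ n) :
    ((( 3 : ℂ)⁻¹) •
        ((4 / ((∑ j : Fin d, 2 ^ (b j) : ℕ) : ℂ)) • (1 : Matrix (SIdx d b) (SIdx d b) ℂ) -
          Split b (Matrix.diagonal fun j => (hρ'.eigenvalues j : ℂ)))).PosSemidef ∧
    ((( 3 : ℂ)⁻¹) •
        ((4 / ((∑ j : Fin d, 2 ^ (b j) : ℕ) : ℂ)) • (1 : Matrix (SIdx d b) (SIdx d b) ℂ) -
          Split b (Matrix.diagonal fun j => (hρ'.eigenvalues j : ℂ)))).trace = 1 := by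
  classical
  set lam : Fin d → ℝ := hρ'.eigenvalues with hlam
  set K : ℕ := ∑ j : Fin d, 2 ^ (b j) with hKdef
  -- d positive
  have hd : 0 < d := by
    rcases Nat.eq_zero_or_pos d with h | h
    · exfalso
      subst h
      rw [show ρ'.trace = 0 by simp [Matrix.trace]] at htr
      exact zero_ne_one htr
    · exact h
  have hlnn : ∀ j, 0 ≤ lam j := fun j => hpsd.eigenvalues_nonneg j
  have hsum : ∑ j, lam j = 1 := by
    have := trace_eq_sum_eigenvalues ρ' hρ'
    rw [htr] at this
    have : ((∑ j, lam j : ℝ) : ℂ) = 1 := by push_cast; exact this.symm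
    exact_mod_cast this
  -- K bounds
  have hKd : (d : ℕ) ≤ K := by
    rw [hKdef]
    calc (d : ℕ) = ∑ _j : Fin d, 1 := by simp
    _ ≤ ∑ j : Fin d, 2 ^ (b j) := Finset.sum_le_sum fun j _ => Nat.one_le_two_pow
  have hKpos : 0 < K := lt_of_lt_of_le hd hKd
  have hK3 : (K : ℝ) ≤ 3 * d := by
    have hj : ∀ j, (2 : ℝ) ^ (b j) ≤ 1 + 2 * (d * lam j) := by
      intro j
      rcases Nat.eq_zero_or_pos (b j) with h0 | h0
      · rw [h0]
        have := mul_nonneg (Nat.cast_nonneg d) (hlnn j)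
        simp; linarith
      · obtain ⟨m, hm⟩ := Nat.exists_eq_succ_of_ne_zero h0.ne'
        have hlt : (2 : ℝ) ^ m < (d : ℝ) * lam j := by
          by_contra hc
          push_neg at hc
          have := hmin j m hc
          omega
        rw [hm, pow_succ]
        nlinarith
    have : (K : ℝ) = ∑ j : Fin d, (2 : ℝ) ^ (b j) := by rw [hKdef]; push_cast; ring
    rw [this]
    calc ∑ j : Fin d, (2 : ℝ) ^ (b j) ≤ ∑ j : Fin d, (1 + 2 * (d * lam j)) :=
          Finset.sum_le_sum fun j _ => hj j
    _ = d + 2 * d * ∑ j, lam j := by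
          rw [Finset.sum_add_distrib, mul_assoc, Finset.mul_sum]
          congr 1
          · simp
          · rw [Finset.mul_sum]
    _ = 3 * d := by rw [hsum]; ring
  -- the matrix is diagonal
  have hdiag :
      ((( 3 : ℂ)⁻¹) •
        ((4 / (K : ℂ)) • (1 : Matrix (SIdx d b) (SIdx d b) ℂ) -
          Split b (Matrix.diagonal fun j => (lam j : ℂ)))) =
      Matrix.diagonal (fun p : SIdx d b =>
        (((3 : ℝ)⁻¹ * (4 / (K : ℝ) - lam p.1 / 2 ^ (b p.1)) : ℝ) : ℂ)) := by
    rw [split_diagonal]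
    ext p q
    by_cases hpq : p = q
    · subst hpq
      simp only [Matrix.smul_apply, Matrix.sub_apply, Matrix.diagonal_apply_eq,
        Matrix.one_apply_eq, smul_eq_mul]
      push_cast
      ring
    · simp [Matrix.diagonal_apply_ne _ hpq, Matrix.one_apply_ne hpq]
  -- entrywise nonnegativity
  have hent : ∀ p : SIdx d b, 0 ≤ (3 : ℝ)⁻¹ * (4 / (K : ℝ) - lam p.1 / 2 ^ (b p.1)) := by
    intro p
    have h2 : (0 : ℝ) < 2 ^ (b p.1) := by positivity
    have hKr : (0 : ℝ) < (K : ℝ) := by exact_mod_cast hKpos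
    have hdr : (0 : ℝ) < (d : ℝ) := by exact_mod_cast hd
    have key : lam p.1 / 2 ^ (b p.1) ≤ 4 / (K : ℝ) := by
      rw [div_le_div_iff₀ h2 hKr]
      have h1 : lam p.1 * K ≤ lam p.1 * (3 * d) :=
        mul_le_mul_of_nonneg_left hK3 (hlnn p.1)
      have h2' : (d : ℝ) * lam p.1 ≤ 2 ^ (b p.1) := hb p.1
      nlinarith
    linarith
  constructor
  · rw [hdiag]
    rw [Matrix.posSemidef_diagonal_iff]
    intro p
    rw [← Complex.ofReal_zero, Complex.real_le_real]
    exact hent p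
  · rw [hdiag, Matrix.trace_diagonal]
    have hsig : ∀ (g : SIdx d b → ℂ),
        ∑ p : SIdx d b, g p = ∑ j : Fin d, ∑ s : Fin (b j) → Bool, g ⟨j, s⟩ := by
      intro g
      rw [← Finset.univ_sigma_univ, Finset.sum_sigma]
    rw [hsig]
    have hcard : ∀ j : Fin d, (Fintype.card (Fin (b j) → Bool) : ℂ) = 2 ^ (b j) := by
      intro j; simp [Fintype.card_fun]
    have hinner : ∀ j : Fin d,
        ∑ _s : Fin (b j) → Bool,
          (((3 : ℝ)⁻¹ * (4 / (K : ℝ) - lam j / 2 ^ (b j)) : ℝ) : ℂ) =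
        (3 : ℂ)⁻¹ * (4 / (K : ℂ)) * 2 ^ (b j) - (3 : ℂ)⁻¹ * (lam j : ℂ) := by
      intro j
      rw [Finset.sum_const, Finset.card_univ, nsmul_eq_mul, hcard j]
      have h2 : ((2 : ℂ) ^ (b j)) ≠ 0 := by positivity
      push_cast
      field_simp
    rw [Finset.sum_congr rfl (fun j _ => hinner j), Finset.sum_sub_distrib,
      ← Finset.mul_sum, ← Finset.mul_sum]
    have hKC : (∑ j : Fin d, (2 : ℂ) ^ (b j)) = (K : ℂ) := by rw [hKdef]; push_cast; ring
    have hsumC : (∑ j : Fin d, (lam j : ℂ)) = 1 := by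
      rw [← Complex.ofReal_sum, hsum, Complex.ofReal_one]
    rw [hKC, hsumC]
    have hKne : (K : ℂ) ≠ 0 := by
      exact_mod_cast Nat.cast_ne_zero.mpr hKpos.ne'
    field_simp
    ring
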